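/- Let X be a compact Hausdorff space, ν a capacity on X, and ∗ a continuous t-norm. Then for every constant c ∈ [0,1] and continuous ψ : X → [0,1], ∫^{∨∗}(c ∗ ψ) dν = c ∗ ∫^{∨∗}ψ dν, where (c ∗ ψ)(x) = c ∗ ψ(x). -/
import Mathlib


open Set

/-- A continuous triangular norm on `[0,1]`, modeled as a binary operation on `ℝ`
restricted to the unit interval. -/
structure Tnorm where
  op : ℝ → ℝ → ℝ
  mem' : ∀ a b : ℝ, a ∈ Set.Icc (0:ℝ) 1 → b ∈ Set.Icc (0:ℝ) 1 → op a b ∈ Set.Icc (0:ℝ) 1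
  comm' : ∀ a b : ℝ, op a b = op b a
  assoc' : ∀ a b c : ℝ, op (op a b) c = op a (op b c)
  mono' : ∀ a b c d : ℝ, a ≤ b → c ≤ d → op a c ≤ op b d
  one_id' : ∀ a ∈ Set.Icc (0:ℝ) 1, op a 1 = a
  cont' : Continuous fun p : ℝ × ℝ => op p.1 p.2

/-- An upper-semicontinuous capacity on a topological space `X`. -/
structure Capacity (X : Type*) [TopologicalSpace X] where
  toFun : Set X → ℝ
  nonneg' : ∀ A : Set X, 0 ≤ toFun A
  le_one' : ∀ A : Set X, toFun A ≤ 1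
  empty' : toFun (∅ : Set X) = 0
  univ' : toFun (Set.univ : Set X) = 1
  mono' : ∀ A B : Set X, A ⊆ B → toFun A ≤ toFun B
  usc' : ∀ F : Set X, IsClosed F → ∀ a : ℝ, toFun F < a →
    ∃ O : Set X, IsOpen O ∧ F ⊆ O ∧ ∀ B : Set X, B ⊆ O → IsCompact B → toFun B < a

/-- Two functions are comonotone (equiordered). -/
def Comonotone {X : Type*} (φ ψ : X → ℝ) : Prop :=
  ∀ x₁ x₂ : X, 0 ≤ (φ x₁ - φ x₂) * (ψ x₁ - ψ x₂)

/-- The t-normed integral `∫^{∨∗} f dν = sup { ν(f⁻¹[t,1]) ∗ t : t ∈ [0,1] }`. -/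
noncomputable def tInt {X : Type*} [TopologicalSpace X] (T : Tnorm) (ν : Capacity X)
    (f : X → ℝ) : ℝ :=
  sSup ((fun t : ℝ => T.op (ν.toFun (f ⁻¹' Set.Icc t 1)) t) '' Set.Icc (0:ℝ) 1)

-- auxiliary lemmas
lemma Tnorm.op_zero (T : Tnorm) (a : ℝ) (ha : a ∈ Set.Icc (0:ℝ) 1) : T.op a 0 = 0 := by
  have h1 : T.op a 0 ≤ T.op 1 0 := T.mono' a 1 0 0 ha.2 le_rfl
  have h2 : T.op 1 0 = T.op 0 1 := T.comm' 1 0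
  have h3 : T.op 0 1 = 0 := T.one_id' 0 ⟨le_rfl, zero_le_one⟩
  have h4 := (T.mem' a 0 ha ⟨le_rfl, zero_le_one⟩).1
  linarith

lemma tInt_elem_mem {X : Type*} [TopologicalSpace X] (T : Tnorm) (ν : Capacity X) (f : X → ℝ) :
    ∀ y ∈ (fun t : ℝ => T.op (ν.toFun (f ⁻¹' Set.Icc t 1)) t) '' Set.Icc (0:ℝ) 1,
      y ∈ Set.Icc (0:ℝ) 1 := by
  rintro y ⟨t, ht, rfl⟩
  exact T.mem' _ _ ⟨ν.nonneg' _, ν.le_one' _⟩ ht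

lemma tInt_set_nonempty {X : Type*} [TopologicalSpace X] (T : Tnorm) (ν : Capacity X)
    (f : X → ℝ) :
    ((fun t : ℝ => T.op (ν.toFun (f ⁻¹' Set.Icc t 1)) t) '' Set.Icc (0:ℝ) 1).Nonempty :=
  ⟨_, ⟨0, ⟨le_rfl, zero_le_one⟩, rfl⟩⟩

lemma tInt_set_bddAbove {X : Type*} [TopologicalSpace X] (T : Tnorm) (ν : Capacity X)
    (f : X → ℝ) :
    BddAbove ((fun t : ℝ => T.op (ν.toFun (f ⁻¹' Set.Icc t 1)) t) '' Set.Icc (0:ℝ) 1) :=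
  ⟨1, fun y hy => (tInt_elem_mem T ν f y hy).2⟩

lemma tInt_mem_Icc {X : Type*} [TopologicalSpace X] (T : Tnorm) (ν : Capacity X) (f : X → ℝ) :
    tInt T ν f ∈ Set.Icc (0:ℝ) 1 := by
  constructor
  · refine le_trans ?_ (le_csSup (tInt_set_bddAbove T ν f) ⟨0, ⟨le_rfl, zero_le_one⟩, rfl⟩)
    exact (T.mem' (ν.toFun (f ⁻¹' Set.Icc 0 1)) 0 ⟨ν.nonneg' _, ν.le_one' _⟩
      ⟨le_rfl, zero_le_one⟩).1
  · exact Real.sSup_le (fun y hy => (tInt_elem_mem T ν f y hy).2) zero_le_one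

/-- Homogeneity of the t-normed integral with respect to the t-norm. -/
theorem tInt_tnorm_homogeneous {X : Type*} [TopologicalSpace X] [CompactSpace X] [T2Space X]
    (T : Tnorm) (ν : Capacity X) (c : ℝ) (hc : c ∈ Set.Icc (0:ℝ) 1)
    (ψ : X → ℝ) (hψc : Continuous ψ) (hψr : ∀ x, ψ x ∈ Set.Icc (0:ℝ) 1) :
    tInt T ν (fun x => T.op c (ψ x)) = T.op c (tInt T ν ψ) := by
  have hI : tInt T ν ψ ∈ Set.Icc (0:ℝ) 1 := tInt_mem_Icc T ν ψ
  have hcontc : Continuous (fun y : ℝ => T.op c y) :=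
    T.cont'.comp (continuous_const.prodMk continuous_id)
  have hmonoc : Monotone (fun y : ℝ => T.op c y) := fun a b h => T.mono' c c a b le_rfl h
  apply le_antisymm
  · -- ≤ direction
    apply Real.sSup_le
    · rintro y ⟨s, hs, rfl⟩
      simp only
      set A := (fun x => T.op c (ψ x)) ⁻¹' Set.Icc s 1 with hA
      by_cases hQ : ({t : ℝ | t ∈ Set.Icc (0:ℝ) 1 ∧ s ≤ T.op c t}).Nonempty
      · set Q := {t : ℝ | t ∈ Set.Icc (0:ℝ) 1 ∧ s ≤ T.op c t} with hQdef
        have hQclosed : IsClosed Q := by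
          have : Q = Set.Icc (0:ℝ) 1 ∩ (fun t => T.op c t) ⁻¹' Set.Ici s := rfl
          rw [this]
          exact isClosed_Icc.inter (isClosed_Ici.preimage hcontc)
        have hQbdd : BddBelow Q := ⟨0, fun t ht => ht.1.1⟩
        set t₀ := sInf Q with ht₀
        have ht₀Q : t₀ ∈ Q := hQclosed.csInf_mem hQ hQbdd
        have hsub : A ⊆ ψ ⁻¹' Set.Icc t₀ 1 := by
          intro x hx
          have hψx := hψr x
          have hxQ : ψ x ∈ Q := ⟨hψx, hx.1⟩
          exact ⟨csInf_le hQbdd hxQ, hψx.2⟩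
        have h1 : T.op (ν.toFun A) s ≤ T.op (ν.toFun (ψ ⁻¹' Set.Icc t₀ 1)) (T.op c t₀) :=
          T.mono' _ _ _ _ (ν.mono' _ _ hsub) ht₀Q.2
        have h2 : T.op (ν.toFun (ψ ⁻¹' Set.Icc t₀ 1)) (T.op c t₀)
            = T.op c (T.op (ν.toFun (ψ ⁻¹' Set.Icc t₀ 1)) t₀) := by
          rw [← T.assoc', T.comm' (ν.toFun _) c, T.assoc']
        have h3 : T.op (ν.toFun (ψ ⁻¹' Set.Icc t₀ 1)) t₀ ≤ tInt T ν ψ :=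
          le_csSup (tInt_set_bddAbove T ν ψ) ⟨t₀, ht₀Q.1, rfl⟩
        calc T.op (ν.toFun A) s ≤ T.op c (T.op (ν.toFun (ψ ⁻¹' Set.Icc t₀ 1)) t₀) := by
              rw [← h2]; exact h1
          _ ≤ T.op c (tInt T ν ψ) := T.mono' c c _ _ le_rfl h3
      · -- A is empty
        have hAempty : A = ∅ := by
          rw [Set.eq_empty_iff_forall_notMem]
          intro x hx
          exact hQ ⟨ψ x, hψr x, hx.1⟩
        rw [hAempty, ν.empty']
        have h0 : T.op 0 s ≤ T.op 0 1 := T.mono' 0 0 s 1 le_rfl hs.2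
        have h1 : T.op 0 1 = 0 := T.one_id' 0 ⟨le_rfl, zero_le_one⟩
        have h2 := (T.mem' c (tInt T ν ψ) hc hI).1
        linarith
    · exact (T.mem' c (tInt T ν ψ) hc hI).1
  · -- ≥ direction
    have key : T.op c (tInt T ν ψ) = sSup ((fun y => T.op c y) ''
        ((fun t : ℝ => T.op (ν.toFun (ψ ⁻¹' Set.Icc t 1)) t) '' Set.Icc (0:ℝ) 1)) :=
      hmonoc.map_csSup_of_continuousAt hcontc.continuousAt
        (tInt_set_nonempty T ν ψ) (tInt_set_bddAbove T ν ψ)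
    rw [key]
    apply Real.sSup_le
    · rintro y ⟨z, ⟨t, ht, rfl⟩, rfl⟩
      simp only
      have hct : T.op c t ∈ Set.Icc (0:ℝ) 1 := T.mem' c t hc ht
      have hsub : ψ ⁻¹' Set.Icc t 1 ⊆ (fun x => T.op c (ψ x)) ⁻¹' Set.Icc (T.op c t) 1 := by
        intro x hx
        exact ⟨T.mono' c c t (ψ x) le_rfl hx.1, (T.mem' c (ψ x) hc (hψr x)).2⟩
      have h1 : T.op c (T.op (ν.toFun (ψ ⁻¹' Set.Icc t 1)) t)
          = T.op (ν.toFun (ψ ⁻¹' Set.Icc t 1)) (T.op c t) := by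
        rw [← T.assoc', T.comm' c (ν.toFun _), T.assoc']
      rw [h1]
      have h2 : T.op (ν.toFun (ψ ⁻¹' Set.Icc t 1)) (T.op c t)
          ≤ T.op (ν.toFun ((fun x => T.op c (ψ x)) ⁻¹' Set.Icc (T.op c t) 1)) (T.op c t) :=
        T.mono' _ _ _ _ (ν.mono' _ _ hsub) le_rfl
      refine le_trans h2 (le_csSup (tInt_set_bddAbove T ν _) ⟨T.op c t, hct, rfl⟩)
    · exact (tInt_mem_Icc T ν (fun x => T.op c (ψ x))).1
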